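/- Fix n ∈ ℕ, set σ = (n+1)(n+2), and let m > n. Then the real symmetric matrix (D − σM)(0:m,0:m) has at most n+1 nonpositive eigenvalues: if μ₀, …, μ_m are its eigenvalues listed with multiplicity, then the number of indices i with μᵢ ≤ 0 is at most n+1. -/

import Mathlib

/-- The diagonal stiffness matrix `D` with `D(n,n) = (n+1)(n+2)`. -/
noncomputable def Dmat (i j : ℕ) : ℝ :=
  if i = j then ((i : ℝ) + 1) * ((i : ℝ) + 2) else 0

/-- The symmetric pentadiagonal mass matrix `M` with
`M(n,n) = 2(n+1)(n+2)/((2n+1)(2n+5))` and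
`M(n,n+2) = M(n+2,n) = -√((n+1)(n+2)(n+3)(n+4)/((2n+3)(2n+5)²(2n+7)))`. -/
noncomputable def Mmat (i j : ℕ) : ℝ :=
  if i = j then 2 * ((i : ℝ) + 1) * ((i : ℝ) + 2) / ((2 * (i : ℝ) + 1) * (2 * (i : ℝ) + 5))
  else if i + 2 = j then
    -Real.sqrt (((i : ℝ) + 1) * ((i : ℝ) + 2) * ((i : ℝ) + 3) * ((i : ℝ) + 4) /
      ((2 * (i : ℝ) + 3) * (2 * (i : ℝ) + 5) ^ 2 * (2 * (i : ℝ) + 7)))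
  else if j + 2 = i then
    -Real.sqrt (((j : ℝ) + 1) * ((j : ℝ) + 2) * ((j : ℝ) + 3) * ((j : ℝ) + 4) /
      ((2 * (j : ℝ) + 3) * (2 * (j : ℝ) + 5) ^ 2 * (2 * (j : ℝ) + 7)))
  else 0

/-- The `(m+1) × (m+1)` principal finite section `(D - σM)(0:m,0:m)`. -/
noncomputable def DshiftSec (σ : ℝ) (m : ℕ) : Matrix (Fin (m + 1)) (Fin (m + 1)) ℝ :=
  Matrix.of fun i j => Dmat (i : ℕ) (j : ℕ) - σ * Mmat (i : ℕ) (j : ℕ)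


lemma Dmat_symm (i j : ℕ) : Dmat i j = Dmat j i := by
  rcases eq_or_ne i j with h | h
  · subst h; rfl
  · unfold Dmat; rw [if_neg h, if_neg (Ne.symm h)]

lemma Mmat_symm (i j : ℕ) : Mmat i j = Mmat j i := by
  rcases eq_or_ne i j with h | h
  · subst h; rfl
  · unfold Mmat
    rw [if_neg h, if_neg (Ne.symm h)]
    split_ifs with h1 h2 <;> first | rfl | (exfalso; omega)

lemma sqrt_term_le (x : ℝ) (hx : 0 ≤ x) :
    Real.sqrt ((x + 1) * (x + 2) * (x + 3) * (x + 4) /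
      ((2 * x + 3) * (2 * x + 5) ^ 2 * (2 * x + 7))) ≤ 1 / 4 := by
  have hden : (0:ℝ) < (2 * x + 3) * (2 * x + 5) ^ 2 * (2 * x + 7) := by positivity
  have h : (x + 1) * (x + 2) * (x + 3) * (x + 4) /
      ((2 * x + 3) * (2 * x + 5) ^ 2 * (2 * x + 7)) ≤ 1 / 16 := by
    rw [div_le_iff₀ hden]
    nlinarith [sq_nonneg x, mul_nonneg hx hx, mul_nonneg (mul_nonneg hx hx) hx]
  calc Real.sqrt _ ≤ Real.sqrt (1 / 16) := Real.sqrt_le_sqrt h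
    _ = 1 / 4 := by
        rw [show (1:ℝ)/16 = (1/4)^2 by norm_num, Real.sqrt_sq (by norm_num)]

lemma diag_gap (σ x : ℝ) (hσ1 : 0 < σ) (hσ2 : σ ≤ x * (x + 1)) (hx : 1 ≤ x) :
    σ / 2 < (x + 1) * (x + 2) - σ * (2 * (x + 1) * (x + 2) / ((2 * x + 1) * (2 * x + 5))) := by
  have hq : (0:ℝ) < (2 * x + 1) * (2 * x + 5) := by nlinarith
  set t : ℝ := 2 * (x + 1) * (x + 2) / ((2 * x + 1) * (2 * x + 5)) with ht0
  have ht : t * ((2 * x + 1) * (2 * x + 5)) = 2 * (x + 1) * (x + 2) :=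
    div_mul_cancel₀ _ (ne_of_gt hq)
  have key : σ / 2 * ((2 * x + 1) * (2 * x + 5)) <
      (x + 1) * (x + 2) * ((2 * x + 1) * (2 * x + 5)) - σ * (2 * (x + 1) * (x + 2)) := by
    nlinarith [mul_nonneg (sub_nonneg.mpr hσ2)
      (by nlinarith : (0:ℝ) ≤ 2 * (x + 1) * (x + 2) + (2 * x + 1) * (2 * x + 5) / 2), hx, hσ1]
  rw [← mul_lt_mul_iff_of_pos_right hq]
  have h2 : ((x + 1) * (x + 2) - σ * t) * ((2 * x + 1) * (2 * x + 5)) =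
      (x + 1) * (x + 2) * ((2 * x + 1) * (2 * x + 5)) - σ * (2 * (x + 1) * (x + 2)) := by
    rw [sub_mul, mul_assoc σ t, ht]
  rw [h2]; exact key

lemma quad_pos (n m : ℕ) (x : Fin (m + 1) → ℝ)
    (hx0 : ∀ i : Fin (m + 1), (i : ℕ) ≤ n → x i = 0) (hx : x ≠ 0) :
    0 < ∑ i, ∑ j, x i * DshiftSec (((n : ℝ) + 1) * ((n : ℝ) + 2)) m i j * x j := by
  classical
  set σ : ℝ := ((n : ℝ) + 1) * ((n : ℝ) + 2) with hσdef
  set A : Matrix (Fin (m + 1)) (Fin (m + 1)) ℝ := DshiftSec σ m with hAdef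
  have hσpos : 0 < σ := by positivity
  have hAsymm : ∀ i j : Fin (m + 1), A i j = A j i := by
    intro i j
    show Dmat (i : ℕ) (j : ℕ) - σ * Mmat (i : ℕ) (j : ℕ)
        = Dmat (j : ℕ) (i : ℕ) - σ * Mmat (j : ℕ) (i : ℕ)
    rw [Mmat_symm, Dmat_symm]
  -- off-diagonal bound
  have hoff : ∀ i j : Fin (m + 1), i ≠ j → |A i j| ≤
      (if (i : ℕ) + 2 = (j : ℕ) then σ / 4 else 0)
        + (if (j : ℕ) + 2 = (i : ℕ) then σ / 4 else 0) := by
    intro i j hij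
    have hvij : (i : ℕ) ≠ (j : ℕ) := fun h => hij (Fin.ext h)
    show |Dmat (i : ℕ) (j : ℕ) - σ * Mmat (i : ℕ) (j : ℕ)| ≤ _
    unfold Dmat Mmat
    rw [if_neg hvij, if_neg hvij]
    split_ifs with h1 h2
    · exfalso; omega
    · have hs := sqrt_term_le ((i : ℕ) : ℝ) (by positivity)
      rw [zero_sub, mul_neg, neg_neg, abs_of_nonneg (by positivity)]
      have := mul_le_mul_of_nonneg_left hs hσpos.le
      linarith
    · have hs := sqrt_term_le ((j : ℕ) : ℝ) (by positivity)
      rw [zero_sub, mul_neg, neg_neg, abs_of_nonneg (by positivity)]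
      have := mul_le_mul_of_nonneg_left hs hσpos.le
      linarith
    · simp
  -- counting lemma
  have hcount : ∀ (p : ℕ → Prop) (_ : DecidablePred p), (∀ a b, p a → p b → a = b) →
      ∑ j : Fin (m + 1), (if p (j : ℕ) then σ / 4 else 0) ≤ σ / 4 := by
    intro p hdec hp
    rw [← Finset.sum_filter, Finset.sum_const, nsmul_eq_mul]
    have h1 : (Finset.univ.filter fun j : Fin (m + 1) => p (j : ℕ)).card ≤ 1 := by
      apply Finset.card_le_one.mpr
      intro a ha b hb
      simp only [Finset.mem_filter] at ha hb
      exact Fin.ext (hp _ _ ha.2 hb.2)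
    calc ((Finset.univ.filter fun j : Fin (m + 1) => p (j : ℕ)).card : ℝ) * (σ / 4)
        ≤ 1 * (σ / 4) := by
          apply mul_le_mul_of_nonneg_right _ (by positivity)
          exact_mod_cast h1
      _ = σ / 4 := one_mul _
  -- row sum bound
  have hrow : ∀ i : Fin (m + 1), ∑ j, (if i = j then (0:ℝ) else |A i j|) ≤ σ / 2 := by
    intro i
    have hb : ∀ j : Fin (m + 1), (if i = j then (0:ℝ) else |A i j|) ≤
        (if (i : ℕ) + 2 = (j : ℕ) then σ / 4 else 0)
          + (if (j : ℕ) + 2 = (i : ℕ) then σ / 4 else 0) := by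
      intro j
      by_cases h : i = j
      · rw [if_pos h]
        have h4 : (0:ℝ) ≤ σ / 4 := by positivity
        split_ifs <;> linarith
      · rw [if_neg h]; exact hoff i j h
    calc ∑ j, (if i = j then (0:ℝ) else |A i j|)
        ≤ ∑ j : Fin (m + 1), ((if (i : ℕ) + 2 = (j : ℕ) then σ / 4 else 0)
            + (if (j : ℕ) + 2 = (i : ℕ) then σ / 4 else 0)) :=
          Finset.sum_le_sum fun j _ => hb j
      _ = (∑ j : Fin (m + 1), if (i : ℕ) + 2 = (j : ℕ) then σ / 4 else 0)
            + (∑ j : Fin (m + 1), if (j : ℕ) + 2 = (i : ℕ) then σ / 4 else 0) :=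
          Finset.sum_add_distrib
      _ ≤ σ / 4 + σ / 4 := by
          apply add_le_add
          · exact hcount (fun a => (i : ℕ) + 2 = a) (by infer_instance)
              (fun a b h1 h2 => by omega)
          · exact hcount (fun a => a + 2 = (i : ℕ)) (by infer_instance)
              (fun a b h1 h2 => by omega)
      _ = σ / 2 := by ring
  -- step 1 : termwise lower bound
  have step1 : ∑ i, ∑ j, (if i = j then A i i * x i ^ 2
        else -(|A i j| * (x i ^ 2 + x j ^ 2) / 2))
      ≤ ∑ i, ∑ j, x i * A i j * x j := by
    apply Finset.sum_le_sum; intro i _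
    apply Finset.sum_le_sum; intro j _
    by_cases h : i = j
    · subst h; rw [if_pos rfl]; exact le_of_eq (by ring)
    · rw [if_neg h]
      have e1 : -|x i * A i j * x j| ≤ x i * A i j * x j := neg_abs_le _
      have e2 : |x i * A i j * x j| ≤ |A i j| * (x i ^ 2 + x j ^ 2) / 2 := by
        rw [abs_mul, abs_mul]
        have h3 : |x i| * |x j| * 2 ≤ x i ^ 2 + x j ^ 2 := by
          nlinarith [sq_nonneg (|x i| - |x j|), sq_abs (x i), sq_abs (x j)]
        have h4 := mul_le_mul_of_nonneg_left h3 (abs_nonneg (A i j))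
        nlinarith [h4]
      linarith
  -- step 2 : rewrite the lower bound
  have hsplit : ∀ i j : Fin (m + 1),
      (if i = j then A i i * x i ^ 2 else -(|A i j| * (x i ^ 2 + x j ^ 2) / 2))
        = (if i = j then A i i * x i ^ 2 else 0)
          - (if i = j then 0 else |A i j| * (x i ^ 2 + x j ^ 2) / 2) := by
    intro i j; split_ifs <;> ring
  have hS : ∑ i, ∑ j, (if i = j then A i i * x i ^ 2
        else -(|A i j| * (x i ^ 2 + x j ^ 2) / 2))
      = (∑ i, A i i * x i ^ 2)
        - ∑ i, ∑ j, (if i = j then (0:ℝ) else |A i j| * (x i ^ 2 + x j ^ 2) / 2) := by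
    simp_rw [hsplit, Finset.sum_sub_distrib]
    congr 1
    apply Finset.sum_congr rfl; intro i _
    rw [Finset.sum_ite_eq]
    simp
  -- step 3 : bound the error term
  have hT1 : ∀ i : Fin (m + 1),
      (∑ j, (if i = j then (0:ℝ) else |A i j| * x i ^ 2) / 2)
        = x i ^ 2 / 2 * ∑ j, (if i = j then (0:ℝ) else |A i j|) := by
    intro i
    rw [Finset.mul_sum]
    apply Finset.sum_congr rfl; intro j _
    split_ifs <;> ring
  have hE : ∑ i, ∑ j, (if i = j then (0:ℝ) else |A i j| * (x i ^ 2 + x j ^ 2) / 2)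
      ≤ ∑ i, σ / 2 * x i ^ 2 := by
    have hEsplit : ∀ i j : Fin (m + 1),
        (if i = j then (0:ℝ) else |A i j| * (x i ^ 2 + x j ^ 2) / 2)
          = (if i = j then (0:ℝ) else |A i j| * x i ^ 2) / 2
            + (if i = j then (0:ℝ) else |A i j| * x j ^ 2) / 2 := by
      intro i j; split_ifs <;> ring
    simp_rw [hEsplit, Finset.sum_add_distrib]
    have hT2 : (∑ i, ∑ j, (if i = j then (0:ℝ) else |A i j| * x j ^ 2) / 2)
        = ∑ i, ∑ j, (if i = j then (0:ℝ) else |A i j| * x i ^ 2) / 2 := by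
      rw [Finset.sum_comm]
      apply Finset.sum_congr rfl; intro b _
      apply Finset.sum_congr rfl; intro a _
      by_cases h : a = b
      · subst h; simp
      · rw [if_neg h, if_neg (Ne.symm h), hAsymm]
    rw [hT2]
    have h1 : (∑ i, ∑ j, (if i = j then (0:ℝ) else |A i j| * x i ^ 2) / 2)
        ≤ ∑ i, σ / 4 * x i ^ 2 := by
      apply Finset.sum_le_sum; intro i _
      rw [hT1 i]
      calc x i ^ 2 / 2 * ∑ j, (if i = j then (0:ℝ) else |A i j|)
          ≤ x i ^ 2 / 2 * (σ / 2) :=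
            mul_le_mul_of_nonneg_left (hrow i) (by positivity)
        _ = σ / 4 * x i ^ 2 := by ring
    calc _ ≤ (∑ i, σ / 4 * x i ^ 2) + (∑ i, σ / 4 * x i ^ 2) := add_le_add h1 h1
      _ = ∑ i, σ / 2 * x i ^ 2 := by
          rw [← Finset.sum_add_distrib]
          apply Finset.sum_congr rfl; intro i _; ring
  -- diagonal coefficient bound
  have hcoef : ∀ i : Fin (m + 1), n + 1 ≤ (i : ℕ) → σ / 2 < A i i := by
    intro i hv
    have hv1 : ((n : ℝ)) + 1 ≤ ((i : ℕ) : ℝ) := by exact_mod_cast hv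
    have hAii : A i i = (((i : ℕ) : ℝ) + 1) * (((i : ℕ) : ℝ) + 2)
        - σ * (2 * (((i : ℕ) : ℝ) + 1) * (((i : ℕ) : ℝ) + 2)
          / ((2 * ((i : ℕ) : ℝ) + 1) * (2 * ((i : ℕ) : ℝ) + 5))) := by
      show Dmat (i : ℕ) (i : ℕ) - σ * Mmat (i : ℕ) (i : ℕ) = _
      unfold Dmat Mmat
      rw [if_pos rfl, if_pos rfl]
    rw [hAii]
    apply diag_gap σ _ hσpos _ (by linarith)
    have h2 : ((n : ℝ)) + 2 ≤ ((i : ℕ) : ℝ) + 1 := by linarith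
    calc σ = ((n : ℝ) + 1) * ((n : ℝ) + 2) := hσdef
      _ ≤ ((i : ℕ) : ℝ) * (((i : ℕ) : ℝ) + 1) := by nlinarith
  -- final positivity
  have hfinal : ∑ i, (A i i - σ / 2) * x i ^ 2 ≤ ∑ i, ∑ j, x i * A i j * x j := by
    calc ∑ i, (A i i - σ / 2) * x i ^ 2
        = (∑ i, A i i * x i ^ 2) - ∑ i, σ / 2 * x i ^ 2 := by
          rw [← Finset.sum_sub_distrib]
          apply Finset.sum_congr rfl; intro i _; ring
      _ ≤ (∑ i, A i i * x i ^ 2)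
            - ∑ i, ∑ j, (if i = j then (0:ℝ) else |A i j| * (x i ^ 2 + x j ^ 2) / 2) :=
          sub_le_sub_left hE _
      _ = ∑ i, ∑ j, (if i = j then A i i * x i ^ 2
            else -(|A i j| * (x i ^ 2 + x j ^ 2) / 2)) := hS.symm
      _ ≤ ∑ i, ∑ j, x i * A i j * x j := step1
  have hpos : 0 < ∑ i, (A i i - σ / 2) * x i ^ 2 := by
    obtain ⟨i₀, hi₀⟩ := Function.ne_iff.mp hx
    have hterm : ∀ i : Fin (m + 1), x i ≠ 0 → 0 < (A i i - σ / 2) * x i ^ 2 := by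
      intro i h
      have hv : n + 1 ≤ (i : ℕ) := by
        by_contra hcon; exact h (hx0 i (by omega))
      have hc := hcoef i hv
      have hx2 : 0 < x i ^ 2 := lt_of_le_of_ne (sq_nonneg _) (Ne.symm (pow_ne_zero 2 h))
      exact mul_pos (by linarith) hx2
    apply Finset.sum_pos'
    · intro i _
      by_cases h : x i = 0
      · rw [h]; simp
      · exact (hterm i h).le
    · exact ⟨i₀, Finset.mem_univ _, hterm i₀ hi₀⟩
  exact lt_of_lt_of_le hpos hfinal

theorem shifted_section_nonpositive_eigenvalue_count
    (n m : ℕ) (hm : n < m)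
    (hA : (DshiftSec (((n : ℝ) + 1) * ((n : ℝ) + 2)) m).IsHermitian) :
    (Finset.univ.filter fun i : Fin (m + 1) => hA.eigenvalues i ≤ 0).card ≤ n + 1 := by
  classical
  by_contra hcon
  push_neg at hcon
  set S := Finset.univ.filter (fun i : Fin (m + 1) => hA.eigenvalues i ≤ 0) with hSdef
  set A := DshiftSec (((n : ℝ) + 1) * ((n : ℝ) + 2)) m with hAdef
  let u : Fin (m + 1) → (Fin (m + 1) → ℝ) := fun i => hA.eigenvectorBasis i
  let φ : ({i // i ∈ S} → ℝ) →ₗ[ℝ] (Fin (n + 1) → ℝ) :=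
    { toFun := fun c k => ∑ i : {i // i ∈ S}, c i * u i.1 (Fin.castLE (by omega) k)
      map_add' := by
        intro a b; funext k
        simp [add_mul, Finset.sum_add_distrib]
      map_smul' := by
        intro r a; funext k
        simp [Finset.mul_sum, mul_assoc] }
  have hker : ∃ c : {i // i ∈ S} → ℝ, c ≠ 0 ∧ φ c = 0 := by
    have hninj : ¬ Function.Injective φ := by
      intro hinj
      have h1 := LinearMap.finrank_le_finrank_of_injective hinj
      rw [Module.finrank_fintype_fun_eq_card, Module.finrank_fintype_fun_eq_card] at h1
      rw [Fintype.card_fin] at h1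
      have h4 : Fintype.card {i // i ∈ S} = S.card := Fintype.card_coe S
      omega
    rw [Function.not_injective_iff] at hninj
    obtain ⟨a, b, hab, hne⟩ := hninj
    exact ⟨a - b, sub_ne_zero.mpr hne, by rw [map_sub, hab, sub_self]⟩
  obtain ⟨c, hc0, hφ⟩ := hker
  let x : Fin (m + 1) → ℝ := fun k => ∑ i : {i // i ∈ S}, c i * u i.1 k
  have horth : ∀ i j : Fin (m + 1), ∑ k, u i k * u j k = if i = j then 1 else 0 := by
    intro i j
    have h1 := (orthonormal_iff_ite.mp hA.eigenvectorBasis.orthonormal) i j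
    simp [PiLp.inner_apply, RCLike.inner_apply, conj_trivial] at h1
    rw [← h1]
    exact Finset.sum_congr rfl fun k _ => by ring
  have hxk : ∀ k : Fin (m + 1), (k : ℕ) ≤ n → x k = 0 := by
    intro k hk
    have h1 : (∑ i : {i // i ∈ S},
        c i * u i.1 (Fin.castLE (by omega) (⟨(k : ℕ), by omega⟩ : Fin (n + 1)))) = 0 :=
      congrFun hφ _
    exact h1
  have hinner : ∀ j : {i // i ∈ S}, ∑ k, u j.1 k * x k = c j := by
    intro j
    calc ∑ k, u j.1 k * x k
        = ∑ k, ∑ i : {i // i ∈ S}, c i * (u j.1 k * u i.1 k) := by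
          apply Finset.sum_congr rfl; intro k _
          show u j.1 k * (∑ i : {i // i ∈ S}, c i * u i.1 k) = _
          rw [Finset.mul_sum]
          apply Finset.sum_congr rfl; intro i _; ring
      _ = ∑ i : {i // i ∈ S}, ∑ k, c i * (u j.1 k * u i.1 k) := Finset.sum_comm
      _ = ∑ i : {i // i ∈ S}, c i * ∑ k, u j.1 k * u i.1 k := by
          apply Finset.sum_congr rfl; intro i _; rw [Finset.mul_sum]
      _ = ∑ i : {i // i ∈ S}, (if j = i then c i else 0) := by
          apply Finset.sum_congr rfl; intro i _
          rw [horth]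
          by_cases h : j = i
          · subst h; simp
          · rw [if_neg h, if_neg (fun hh => h (Subtype.ext hh)), mul_zero]
      _ = c j := by rw [Finset.sum_ite_eq]; simp
  have hxne : x ≠ 0 := by
    obtain ⟨j₀, hj₀⟩ := Function.ne_iff.mp hc0
    intro h0
    have h2 := hinner j₀
    rw [h0] at h2
    simp only [Pi.zero_apply, mul_zero, Finset.sum_const_zero] at h2
    exact hj₀ h2.symm
  have hmulvec : ∀ i : Fin (m + 1), ∀ k, ∑ l, A k l * u i l = hA.eigenvalues i * u i k := by
    intro i k
    have h2 := congrFun (hA.mulVec_eigenvectorBasis i) k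
    simpa [u, Matrix.mulVec, dotProduct, Pi.smul_apply, smul_eq_mul] using h2
  have hQ : (∑ k, ∑ l, x k * A k l * x l)
      = ∑ i : {i // i ∈ S}, hA.eigenvalues i.1 * c i ^ 2 := by
    calc ∑ k, ∑ l, x k * A k l * x l
        = ∑ k, x k * ∑ l, A k l * x l := by
          apply Finset.sum_congr rfl; intro k _
          rw [Finset.mul_sum]; apply Finset.sum_congr rfl; intro l _; ring
      _ = ∑ k, x k * ∑ i : {i // i ∈ S}, c i * (hA.eigenvalues i.1 * u i.1 k) := by
          apply Finset.sum_congr rfl; intro k _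
          congr 1
          calc ∑ l, A k l * x l
              = ∑ l, ∑ i : {i // i ∈ S}, c i * (A k l * u i.1 l) := by
                apply Finset.sum_congr rfl; intro l _
                show A k l * (∑ i : {i // i ∈ S}, c i * u i.1 l) = _
                rw [Finset.mul_sum]; apply Finset.sum_congr rfl; intro i _; ring
            _ = ∑ i : {i // i ∈ S}, ∑ l, c i * (A k l * u i.1 l) := Finset.sum_comm
            _ = ∑ i : {i // i ∈ S}, c i * (hA.eigenvalues i.1 * u i.1 k) := by
                apply Finset.sum_congr rfl; intro i _
                rw [← hmulvec i.1 k, Finset.mul_sum]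
      _ = ∑ i : {i // i ∈ S}, (hA.eigenvalues i.1 * c i) * ∑ k, u i.1 k * x k := by
          calc ∑ k, x k * ∑ i : {i // i ∈ S}, c i * (hA.eigenvalues i.1 * u i.1 k)
              = ∑ k, ∑ i : {i // i ∈ S},
                  (hA.eigenvalues i.1 * c i) * (u i.1 k * x k) := by
                apply Finset.sum_congr rfl; intro k _
                rw [Finset.mul_sum]; apply Finset.sum_congr rfl; intro i _; ring
            _ = ∑ i : {i // i ∈ S}, ∑ k,
                  (hA.eigenvalues i.1 * c i) * (u i.1 k * x k) := Finset.sum_comm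
            _ = ∑ i : {i // i ∈ S}, (hA.eigenvalues i.1 * c i) * ∑ k, u i.1 k * x k := by
                apply Finset.sum_congr rfl; intro i _; rw [Finset.mul_sum]
      _ = ∑ i : {i // i ∈ S}, hA.eigenvalues i.1 * c i ^ 2 := by
          apply Finset.sum_congr rfl; intro i _
          rw [hinner i]; ring
  have hQle : (∑ k, ∑ l, x k * A k l * x l) ≤ 0 := by
    rw [hQ]
    apply Finset.sum_nonpos
    intro i _
    have hiS : hA.eigenvalues i.1 ≤ 0 := (Finset.mem_filter.mp i.2).2
    exact mul_nonpos_of_nonpos_of_nonneg hiS (sq_nonneg _)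
  have hquad := quad_pos n m x hxk hxne
  rw [← hAdef] at hquad
  linarith
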